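/- The WFA A over Σ = {a,b} with 2 states given by α₀ᵀ = [1, 0], α∞ᵀ = [1/3, 1/3], A_a = [[0, 1/3],[1/3, 0]], A_b = [[−1/3, 0],[0, 1/3]] realizes a function f_A satisfying f_A(x)² = 3^{−2(|x|+1)} for every x ∈ Σ*, i.e., |f_A(x)| = 3^{−(|x|+1)}. -/

import Mathlib

open Matrix

/-- Transition matrix for the symbol `a` (encoded as `false`). -/
noncomputable def matA : Matrix (Fin 2) (Fin 2) ℝ := !![0, 1/3; 1/3, 0]

/-- Transition matrix for the symbol `b` (encoded as `true`). -/
noncomputable def matB : Matrix (Fin 2) (Fin 2) ℝ := !![-(1/3), 0; 0, 1/3]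

/-- The function realized by the example WFA over `Σ = {a, b}` with
`α₀ᵀ = [1, 0]`, `α∞ᵀ = [1/3, 1/3]`. -/
noncomputable def fEx (x : List Bool) : ℝ :=
  ![(1 : ℝ), 0] ⬝ᵥ ((x.map fun b => bif b then matB else matA).prod).mulVec ![1/3, 1/3]

private lemma key (x : List Bool) :
    (((x.map fun b => bif b then matB else matA).prod).mulVec ![1/3, 1/3] 0) ^ 2
        = ((1 : ℝ) / 3) ^ (2 * (x.length + 1)) ∧
    (((x.map fun b => bif b then matB else matA).prod).mulVec ![1/3, 1/3] 1) ^ 2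
        = ((1 : ℝ) / 3) ^ (2 * (x.length + 1)) := by
  induction x with
  | nil =>
    norm_num [Matrix.mulVec, dotProduct]
  | cons b x ih =>
    obtain ⟨h0, h1⟩ := ih
    have : ((((b :: x).map fun b => bif b then matB else matA).prod).mulVec ![1/3, 1/3])
        = (bif b then matB else matA).mulVec
            (((x.map fun b => bif b then matB else matA).prod).mulVec ![1/3, 1/3]) := by
      simp only [List.map_cons, List.prod_cons, Matrix.mulVec_mulVec]
    rw [this]
    set v := ((x.map fun b => bif b then matB else matA).prod).mulVec ![1/3, 1/3] with hv
    cases b <;>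
      simp only [cond_false, cond_true, matA, matB] <;>
      constructor <;>
      · show (_ : ℝ) ^ 2 = _
        simp [Matrix.mulVec, dotProduct, Fin.sum_univ_two, List.length_cons]
        ring_nf
        ring_nf at h0 h1
        linarith [h0, h1]

theorem fEx_abs_eq :
    ∀ x : List Bool,
      (fEx x) ^ 2 = ((1 : ℝ) / 3) ^ (2 * (x.length + 1)) ∧
        |fEx x| = ((1 : ℝ) / 3) ^ (x.length + 1) := by
  intro x
  have h := (key x).1
  have hf : fEx x = ((x.map fun b => bif b then matB else matA).prod).mulVec ![1/3, 1/3] 0 := by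
    simp [fEx, dotProduct, Fin.sum_univ_two]
  have hsq : (fEx x) ^ 2 = ((1 : ℝ) / 3) ^ (2 * (x.length + 1)) := by rw [hf]; exact h
  refine ⟨hsq, ?_⟩
  have : |fEx x| = Real.sqrt ((fEx x) ^ 2) := (Real.sqrt_sq_eq_abs _).symm
  rw [this, hsq, show 2 * (x.length + 1) = (x.length + 1) * 2 by ring, pow_mul,
    Real.sqrt_sq (by positivity)]
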